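/- Let k be a field of characteristic zero, I a nonzero ideal of R = k[x_1,…,x_n], and p ∈ k^n. Then ord_p(I) equals the smallest natural number a such that D^a(I) is not contained in m_p; equivalently, for every natural number a, D^a(I) ⊆ m_p if and only if a < ord_p(I). -/

import Mathlib

open MvPolynomial

/-- The derivative ideal: the ideal generated by `I` together with all first partial
derivatives of its elements. -/
noncomputable def derivIdeal {k : Type*} [CommSemiring k] {σ : Type*}
    (I : Ideal (MvPolynomial σ k)) : Ideal (MvPolynomial σ k) :=
  I ⊔ Ideal.span {g | ∃ f ∈ I, ∃ i : σ, g = pderiv i f}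

/-- The order of a nonzero polynomial at a point `p`: the smallest total degree of a monomial
appearing in the shifted polynomial `f(x+p)`. -/
noncomputable def polyOrdAt {k : Type*} [CommSemiring k] {σ : Type*} (p : σ → k)
    (f : MvPolynomial σ k) : ℕ :=
  sInf {m | ∃ d ∈ (aeval (fun i => X i + C (p i)) f : MvPolynomial σ k).support,
    (d.sum fun _ e => e) = m}

/-- The order of a nonzero ideal at a point: `min {ord_p f : 0 ≠ f ∈ I}`. -/
noncomputable def idealOrdAt {k : Type*} [CommSemiring k] {σ : Type*} (p : σ → k)
    (I : Ideal (MvPolynomial σ k)) : ℕ :=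
  sInf {m | ∃ f ∈ I, f ≠ 0 ∧ polyOrdAt p f = m}

/-- The maximal ideal `m_p` of polynomials vanishing at the point `p`. -/
noncomputable def vanishingIdeal {k : Type*} [CommSemiring k] {σ : Type*} (p : σ → k) :
    Ideal (MvPolynomial σ k) :=
  RingHom.ker (eval p)

set_option linter.unusedSectionVars false
set_option linter.unusedVariables false

section Aux

variable {k : Type*} [Field k] [CharZero k] {n : ℕ}

/-- degree sum of a multi-index -/
local notation "degsum" d => (Finsupp.sum d fun _ e => e)

lemma degsum_add (u v : Fin n →₀ ℕ) :
    (degsum (u + v)) = (degsum u) + (degsum v) :=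
  Finsupp.sum_add_index' (fun _ => rfl) (fun _ _ _ => rfl)

lemma degsum_single (i : Fin n) : (degsum (Finsupp.single i 1)) = 1 :=
  Finsupp.sum_single_index rfl

lemma degsum_eq_zero {d : Fin n →₀ ℕ} (h : (degsum d) = 0) : d = 0 := by
  ext i
  by_contra hi
  have hmem : i ∈ d.support := Finsupp.mem_support_iff.mpr hi
  have := Finset.sum_eq_zero_iff.mp h i hmem
  exact hi this

/-- the trailing total degree of a polynomial -/
noncomputable def tord (g : MvPolynomial (Fin n) k) : ℕ :=
  sInf {m | ∃ d ∈ g.support, (degsum d) = m}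

lemma tord_mem {g : MvPolynomial (Fin n) k} (hg : g ≠ 0) :
    ∃ d ∈ g.support, (degsum d) = tord g := by
  have hne : {m | ∃ d ∈ g.support, (degsum d) = m}.Nonempty := by
    obtain ⟨d, hd⟩ := Finset.nonempty_iff_ne_empty.mpr
      (fun h => hg (MvPolynomial.support_eq_empty.mp h))
    exact ⟨_, d, hd, rfl⟩
  exact Nat.sInf_mem hne

lemma tord_le {g : MvPolynomial (Fin n) k} {d : Fin n →₀ ℕ} (hd : d ∈ g.support) :
    tord g ≤ degsum d :=
  Nat.sInf_le ⟨d, hd, rfl⟩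

/-- "all monomials have total degree at least m" -/
def ordGE (m : ℕ) (g : MvPolynomial (Fin n) k) : Prop :=
  ∀ d ∈ g.support, m ≤ degsum d

lemma le_tord {g : MvPolynomial (Fin n) k} {m : ℕ} (hg : g ≠ 0) (h : ordGE m g) :
    m ≤ tord g := by
  obtain ⟨d, hd, hsum⟩ := tord_mem hg
  exact hsum ▸ h d hd

lemma ordGE_of_le_tord {g : MvPolynomial (Fin n) k} {m : ℕ} (h : m ≤ tord g) : ordGE m g :=
  fun d hd => le_trans h (tord_le hd)

lemma ordGE_mono {g : MvPolynomial (Fin n) k} {m m' : ℕ} (hm : m' ≤ m) (h : ordGE m g) :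
    ordGE m' g := fun d hd => le_trans hm (h d hd)

lemma ordGE_zero (m : ℕ) : ordGE m (0 : MvPolynomial (Fin n) k) := by
  intro d hd
  simp at hd

lemma ordGE_add {g h : MvPolynomial (Fin n) k} {m : ℕ} (hg : ordGE m g) (hh : ordGE m h) :
    ordGE m (g + h) := by
  intro d hd
  rcases Finset.mem_union.mp (MvPolynomial.support_add hd) with h' | h'
  · exact hg d h'
  · exact hh d h'

lemma ordGE_mul {g h : MvPolynomial (Fin n) k} {m : ℕ} (hh : ordGE m h) :
    ordGE m (g * h) := by
  classical
  intro d hd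
  obtain ⟨u, hu, v, hv, rfl⟩ := Finset.mem_add.mp (MvPolynomial.support_mul g h hd)
  calc m ≤ degsum v := hh v hv
    _ ≤ (degsum u) + (degsum v) := Nat.le_add_left _ _
    _ = degsum (u + v) := (degsum_add u v).symm

lemma coeff_pderiv (i : Fin n) (u : Fin n →₀ ℕ) (g : MvPolynomial (Fin n) k) :
    coeff u (pderiv i g) = ((u i + 1 : ℕ) : k) * coeff (u + Finsupp.single i 1) g := by
  induction g using MvPolynomial.induction_on' with
  | add f g hf hg => simp [hf, hg, mul_add]
  | monomial s a =>
    rw [pderiv_monomial, coeff_monomial, coeff_monomial]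
    by_cases h : s = u + Finsupp.single i 1
    · subst h
      have h1 : u + Finsupp.single i 1 - Finsupp.single i 1 = u := by simp
      rw [if_pos h1, if_pos rfl, Finsupp.add_apply, Finsupp.single_eq_same]
      push_cast
      ring
    · rw [if_neg h, mul_zero]
      rcases Nat.eq_zero_or_pos (s i) with hs | hs
      · rw [hs, Nat.cast_zero, mul_zero]
        simp
      · have hne : s - Finsupp.single i 1 ≠ u := by
          intro hu
          apply h
          rw [← hu, tsub_add_cancel_of_le (Finsupp.single_le_iff.mpr hs)]
        rw [if_neg hne]

lemma ordGE_pderiv {g : MvPolynomial (Fin n) k} {m : ℕ} (i : Fin n) (h : ordGE (m + 1) g) :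
    ordGE m (pderiv i g) := by
  intro u hu
  have hcoeff : coeff u (pderiv i g) ≠ 0 := Finsupp.mem_support_iff.mp hu
  rw [_root_.coeff_pderiv] at hcoeff
  have h2 : coeff (u + Finsupp.single i 1) g ≠ 0 := by
    intro h0
    rw [h0, mul_zero] at hcoeff
    exact hcoeff rfl
  have := h _ (Finsupp.mem_support_iff.mpr h2)
  rw [degsum_add, degsum_single] at this
  omega

lemma exists_pderiv_tord {g : MvPolynomial (Fin n) k} {m : ℕ} (hg : g ≠ 0)
    (h : tord g = m + 1) : ∃ i, pderiv i g ≠ 0 ∧ tord (pderiv i g) = m := by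
  obtain ⟨d, hd, hsum⟩ := tord_mem hg
  rw [h] at hsum
  have hdne : d ≠ 0 := by
    intro h0
    rw [h0] at hsum
    simp [Finsupp.sum_zero_index] at hsum
  obtain ⟨i, hi⟩ := Finsupp.ne_iff.mp hdne
  rw [Finsupp.coe_zero, Pi.zero_apply] at hi
  have hpos : 1 ≤ d i := Nat.one_le_iff_ne_zero.mpr hi
  set u := d - Finsupp.single i 1 with hu
  have hcancel : u + Finsupp.single i 1 = d :=
    tsub_add_cancel_of_le (Finsupp.single_le_iff.mpr hpos)
  have hcoeff : coeff u (pderiv i g) ≠ 0 := by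
    rw [_root_.coeff_pderiv, hcancel]
    have : coeff d g ≠ 0 := Finsupp.mem_support_iff.mp hd
    exact mul_ne_zero (Nat.cast_ne_zero.mpr (Nat.succ_ne_zero _)) this
  have hmem : u ∈ (pderiv i g).support := Finsupp.mem_support_iff.mpr hcoeff
  have husum : (degsum u) = m := by
    have := degsum_add u (Finsupp.single i 1)
    rw [hcancel, hsum, degsum_single] at this
    omega
  have hne : pderiv i g ≠ 0 := by
    intro h0
    rw [h0] at hmem
    simp at hmem
  refine ⟨i, hne, le_antisymm (husum ▸ tord_le hmem) ?_⟩
  apply le_tord hne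
  exact ordGE_pderiv i (ordGE_of_le_tord h.ge)

variable (p : Fin n → k)

/-- the translation map f(x) ↦ f(x + p) -/
noncomputable def shiftMap : MvPolynomial (Fin n) k →ₐ[k] MvPolynomial (Fin n) k :=
  aeval (fun i => X i + C (p i))

lemma shiftMap_leftInv (f : MvPolynomial (Fin n) k) :
    aeval (fun i => X i - C (p i)) (shiftMap p f) = f := by
  rw [shiftMap, comp_aeval_apply]
  have : (fun i => aeval (fun j => X j - C (p j)) (X i + C (p i)))
      = (X : Fin n → MvPolynomial (Fin n) k) := by
    funext i
    simp [algebraMap_eq]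
  rw [this, aeval_X_left_apply]

lemma shiftMap_ne_zero {f : MvPolynomial (Fin n) k} (hf : f ≠ 0) : shiftMap p f ≠ 0 := by
  intro h
  apply hf
  have := shiftMap_leftInv p f
  rw [h, map_zero] at this
  exact this.symm

lemma polyOrdAt_eq_tord (f : MvPolynomial (Fin n) k) : polyOrdAt p f = tord (shiftMap p f) := rfl

lemma shiftMap_pderiv (i : Fin n) (f : MvPolynomial (Fin n) k) :
    pderiv i (shiftMap p f) = shiftMap p (pderiv i f) := by
  induction f using MvPolynomial.induction_on with
  | C a => simp [shiftMap, pderiv_C]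
  | add f g hf hg => simp [map_add, hf, hg]
  | mul_X f j hf =>
    have hX : shiftMap p (X j) = X j + C (p j) := aeval_X _ j
    have hr : shiftMap p ((pderiv i) (f * X j))
        = shiftMap p ((pderiv i) f) * (X j + C (p j))
          + shiftMap p f * shiftMap p ((pderiv i) (X j)) := by
      rw [pderiv_mul, map_add, map_mul, map_mul, hX]
    rw [hr, map_mul, hX, pderiv_mul, hf]
    congr 1
    congr 1
    rw [map_add, pderiv_C, add_zero]
    rcases eq_or_ne j i with rfl | hne
    · rw [pderiv_X_self, map_one]
    · rw [pderiv_X_of_ne hne, map_zero]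

lemma eval_eq_constantCoeff_shiftMap (f : MvPolynomial (Fin n) k) :
    eval p f = constantCoeff (shiftMap p f) := by
  have h1 : aeval (fun _ : Fin n => (0 : k)) (shiftMap p f)
      = algebraMap k k (constantCoeff (shiftMap p f)) := aeval_zero' _
  rw [Algebra.algebraMap_self, RingHom.id_apply] at h1
  rw [← h1, shiftMap, comp_aeval_apply]
  have : (fun i => aeval (fun _ : Fin n => (0 : k)) (X i + C (p i))) = p := by
    funext i
    simp [algebraMap_eq]
  rw [this]
  rfl

/-- order at p, allowing zero: all monomials of the shifted polynomial have degree ≥ m -/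
def OrdGEAt (m : ℕ) (f : MvPolynomial (Fin n) k) : Prop := ordGE m (shiftMap p f)

lemma ordGEAt_iff {m : ℕ} {f : MvPolynomial (Fin n) k} (hf : f ≠ 0) :
    OrdGEAt p m f ↔ m ≤ polyOrdAt p f := by
  rw [polyOrdAt_eq_tord]
  exact ⟨le_tord (shiftMap_ne_zero p hf), ordGE_of_le_tord⟩

lemma ordGEAt_zero (m : ℕ) : OrdGEAt p m (0 : MvPolynomial (Fin n) k) := by
  unfold OrdGEAt
  rw [map_zero]
  exact ordGE_zero m

lemma ordGEAt_add {m : ℕ} {f g : MvPolynomial (Fin n) k} (hf : OrdGEAt p m f)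
    (hg : OrdGEAt p m g) : OrdGEAt p m (f + g) := by
  unfold OrdGEAt at *
  rw [map_add]
  exact ordGE_add hf hg

lemma ordGEAt_mul {m : ℕ} (g : MvPolynomial (Fin n) k) {f : MvPolynomial (Fin n) k}
    (hf : OrdGEAt p m f) : OrdGEAt p m (g * f) := by
  unfold OrdGEAt at *
  rw [map_mul]
  exact ordGE_mul hf

lemma ordGEAt_pderiv {m : ℕ} (i : Fin n) {f : MvPolynomial (Fin n) k}
    (hf : OrdGEAt p (m + 1) f) : OrdGEAt p m (pderiv i f) := by
  unfold OrdGEAt at *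
  rw [← shiftMap_pderiv]
  exact ordGE_pderiv i hf

lemma mem_vanishingIdeal_iff {f : MvPolynomial (Fin n) k} (hf : f ≠ 0) :
    f ∈ vanishingIdeal p ↔ OrdGEAt p 1 f := by
  have hker : f ∈ vanishingIdeal p ↔ eval p f = 0 := RingHom.mem_ker
  rw [hker, eval_eq_constantCoeff_shiftMap, constantCoeff_eq]
  set g := shiftMap p f with hg
  constructor
  · intro h0 d hd
    rcases Nat.eq_zero_or_pos (degsum d) with hz | hpos
    · exfalso
      have hd0 : d = 0 := degsum_eq_zero hz
      subst hd0
      exact (Finsupp.mem_support_iff.mp hd) h0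
    · exact hpos
  · intro h
    by_contra h0
    have hd : (0 : Fin n →₀ ℕ) ∈ g.support := Finsupp.mem_support_iff.mpr h0
    have := h 0 hd
    simp [Finsupp.sum_zero_index] at this

-- ideal-level lemmas

lemma idealOrdAt_witness {I : Ideal (MvPolynomial (Fin n) k)} (hI : I ≠ ⊥) :
    ∃ f ∈ I, f ≠ 0 ∧ polyOrdAt p f = idealOrdAt p I := by
  obtain ⟨f, hf, hfne⟩ := Submodule.ne_bot_iff I |>.mp hI
  have hne : {m | ∃ f ∈ I, f ≠ 0 ∧ polyOrdAt p f = m}.Nonempty :=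
    ⟨polyOrdAt p f, f, hf, hfne, rfl⟩
  exact Nat.sInf_mem hne

lemma idealOrdAt_le {I : Ideal (MvPolynomial (Fin n) k)} {f : MvPolynomial (Fin n) k}
    (hf : f ∈ I) (hne : f ≠ 0) : idealOrdAt p I ≤ polyOrdAt p f :=
  Nat.sInf_le ⟨f, hf, hne, rfl⟩

lemma forall_ordGEAt {I : Ideal (MvPolynomial (Fin n) k)} {m : ℕ}
    (h : m ≤ idealOrdAt p I) : ∀ f ∈ I, OrdGEAt p m f := by
  intro f hf
  rcases eq_or_ne f 0 with rfl | hne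
  · exact ordGEAt_zero p m
  · exact (ordGEAt_iff p hne).mpr (le_trans h (idealOrdAt_le p hf hne))

lemma le_idealOrdAt {I : Ideal (MvPolynomial (Fin n) k)} {m : ℕ} (hI : I ≠ ⊥)
    (h : ∀ f ∈ I, OrdGEAt p m f) : m ≤ idealOrdAt p I := by
  obtain ⟨f, hf, hfne, hford⟩ := idealOrdAt_witness p hI
  rw [← hford]
  exact (ordGEAt_iff p hfne).mp (h f hf)

lemma derivIdeal_eq_span (I : Ideal (MvPolynomial (Fin n) k)) :
    derivIdeal I = Ideal.span ((I : Set (MvPolynomial (Fin n) k))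
      ∪ {g | ∃ f ∈ I, ∃ i : Fin n, g = pderiv i f}) := by
  rw [Ideal.span_union, Ideal.span_eq, derivIdeal]

lemma le_derivIdeal (I : Ideal (MvPolynomial (Fin n) k)) : I ≤ derivIdeal I := le_sup_left

lemma pderiv_mem_derivIdeal {I : Ideal (MvPolynomial (Fin n) k)} {f : MvPolynomial (Fin n) k}
    (hf : f ∈ I) (i : Fin n) : pderiv i f ∈ derivIdeal I :=
  Submodule.mem_sup_right (Ideal.subset_span ⟨f, hf, i, rfl⟩)

lemma derivIdeal_forall_ordGEAt {I : Ideal (MvPolynomial (Fin n) k)} {m : ℕ}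
    (h : ∀ f ∈ I, OrdGEAt p (m + 1) f) : ∀ g ∈ derivIdeal I, OrdGEAt p m g := by
  intro g hg
  rw [derivIdeal_eq_span] at hg
  induction hg using Submodule.span_induction with
  | mem x hx =>
    rcases hx with hx | ⟨f, hf, i, rfl⟩
    · intro d hd
      have := h x hx d hd
      omega
    · exact ordGEAt_pderiv p i (h f hf)
  | zero => exact ordGEAt_zero p m
  | add x y _ _ hx hy => exact ordGEAt_add p hx hy
  | smul a x _ hx => exact ordGEAt_mul p a hx

lemma derivIdeal_ne_bot {I : Ideal (MvPolynomial (Fin n) k)} (hI : I ≠ ⊥) :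
    derivIdeal I ≠ ⊥ := fun h => hI (le_bot_iff.mp (h ▸ le_derivIdeal I))

lemma idealOrdAt_derivIdeal {I : Ideal (MvPolynomial (Fin n) k)} (hI : I ≠ ⊥) :
    idealOrdAt p (derivIdeal I) = idealOrdAt p I - 1 := by
  rcases Nat.eq_zero_or_pos (idealOrdAt p I) with h0 | hpos
  · obtain ⟨f, hf, hfne, hford⟩ := idealOrdAt_witness p hI
    have h1 := idealOrdAt_le p (le_derivIdeal I hf) hfne
    omega
  · obtain ⟨m, hm⟩ : ∃ m, idealOrdAt p I = m + 1 := ⟨idealOrdAt p I - 1, by omega⟩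
    rw [hm, Nat.add_sub_cancel]
    apply le_antisymm
    · -- find element of order m in derivIdeal I
      obtain ⟨f, hf, hfne, hford⟩ := idealOrdAt_witness p hI
      rw [polyOrdAt_eq_tord] at hford
      have htord : tord (shiftMap p f) = m + 1 := by rw [hford, hm]
      obtain ⟨i, hne, hord⟩ := exists_pderiv_tord (shiftMap_ne_zero p hfne) htord
      rw [shiftMap_pderiv] at hne hord
      have hpne : pderiv i f ≠ 0 := by
        intro h0
        rw [h0, map_zero] at hne
        exact hne rfl
      have : polyOrdAt p (pderiv i f) = m := hord
      calc idealOrdAt p (derivIdeal I) ≤ polyOrdAt p (pderiv i f) :=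
            idealOrdAt_le p (pderiv_mem_derivIdeal hf i) hpne
        _ = m := this
    · apply le_idealOrdAt p (derivIdeal_ne_bot hI)
      apply derivIdeal_forall_ordGEAt
      exact forall_ordGEAt p (le_of_eq hm.symm)

lemma idealOrdAt_iterate (I : Ideal (MvPolynomial (Fin n) k)) (hI : I ≠ ⊥) (a : ℕ) :
    derivIdeal^[a] I ≠ ⊥ ∧ idealOrdAt p (derivIdeal^[a] I) = idealOrdAt p I - a := by
  induction a with
  | zero => simpa using hI
  | succ a ih =>
    rw [Function.iterate_succ_apply']
    refine ⟨derivIdeal_ne_bot ih.1, ?_⟩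
    rw [idealOrdAt_derivIdeal p ih.1, ih.2]
    omega

lemma le_vanishingIdeal_iff {J : Ideal (MvPolynomial (Fin n) k)} (hJ : J ≠ ⊥) :
    J ≤ vanishingIdeal p ↔ 1 ≤ idealOrdAt p J := by
  constructor
  · intro h
    obtain ⟨f, hf, hfne, hford⟩ := idealOrdAt_witness p hJ
    rw [← hford, ← ordGEAt_iff p hfne]
    exact (mem_vanishingIdeal_iff p hfne).mp (h hf)
  · intro h f hf
    rcases eq_or_ne f 0 with rfl | hne
    · exact Ideal.zero_mem _
    · exact (mem_vanishingIdeal_iff p hne).mpr (forall_ordGEAt p h f hf)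

end Aux

/-- For a nonzero ideal `I` over a field of characteristic zero and a point `p`, the order
`ord_p(I)` is the smallest `a` such that `Dᵃ(I) ⊄ m_p`; equivalently, for every `a`,
`Dᵃ(I) ⊆ m_p ↔ a < ord_p(I)`. -/
theorem idealOrdAt_eq_sInf_derivIdeal {k : Type*} [Field k] [CharZero k] {n : ℕ}
    (I : Ideal (MvPolynomial (Fin n) k)) (hI : I ≠ ⊥) (p : Fin n → k) :
    idealOrdAt p I = sInf {a : ℕ | ¬ derivIdeal^[a] I ≤ vanishingIdeal p} ∧
    ∀ a : ℕ, derivIdeal^[a] I ≤ vanishingIdeal p ↔ a < idealOrdAt p I := by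
  have key : ∀ a : ℕ, derivIdeal^[a] I ≤ vanishingIdeal p ↔ a < idealOrdAt p I := by
    intro a
    obtain ⟨hne, hord⟩ := idealOrdAt_iterate p I hI a
    rw [le_vanishingIdeal_iff p hne, hord]
    omega
  refine ⟨?_, key⟩
  have hset : {a : ℕ | ¬ derivIdeal^[a] I ≤ vanishingIdeal p}
      = {a : ℕ | idealOrdAt p I ≤ a} := by
    ext a
    simp [key a]
  rw [hset]
  apply le_antisymm
  · have h := Nat.sInf_mem (⟨idealOrdAt p I, by simp⟩ :
      Set.Nonempty {a : ℕ | idealOrdAt p I ≤ a})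
    simpa using h
  · exact Nat.sInf_le (by simp)
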